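/- With R = 0 and K even, and writing M = (K/2)m, the probability p_A^{α,β,A}(x) that in an A-set the score reaches (α,β) with A scoring the last point and scoring exactly x points on own serve equals C(M, x) p_a^x(1-p_a)^{M-x} · C(M-1, α-x-1)(1-p_b)^{α-x} p_b^{M-α+x}, for max(0, α-M) ≤ x ≤ min(α-1, M), where α+β = Km. -/

import Mathlib

open Finset in
private lemma sum_ite_even' (K : ℕ) :
    ∑ j ∈ range K, (if j % 2 = 0 then (1:ℕ) else 0) = (K+1)/2 := by
  induction K with
  | zero => simp
  | succ n ih =>
    rw [Finset.sum_range_succ, ih]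
    split <;> omega

open Finset in
private lemma card_range_filter' (K m : ℕ) (hm : 1 ≤ m) :
    ((range (K*m)).filter (fun i => i / m % 2 = 0)).card = (K+1)/2 * m := by
  have hm' : 0 < m := hm
  rw [Finset.card_filter]
  have h1 : ∑ i ∈ range (K*m), (if i / m % 2 = 0 then (1:ℕ) else 0)
      = ∑ p ∈ range K ×ˢ range m, (if p.1 % 2 = 0 then (1:ℕ) else 0) := by
    refine Finset.sum_nbij' (fun i => (i / m, i % m)) (fun p => p.1 * m + p.2) ?_ ?_ ?_ ?_ ?_
    · intro a ha
      simp only [mem_range] at ha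
      simp only [mem_product, mem_range]
      exact ⟨Nat.div_lt_of_lt_mul (by rw [mul_comm]; exact ha), Nat.mod_lt _ hm'⟩
    · intro p hp
      simp only [mem_product, mem_range] at hp
      simp only [mem_range]
      calc p.1 * m + p.2 < p.1 * m + m := by omega
        _ = (p.1 + 1) * m := by ring
        _ ≤ K * m := Nat.mul_le_mul_right m hp.1
    · intro a _; exact Nat.div_add_mod' a m
    · intro p hp
      simp only [mem_product, mem_range] at hp
      ext
      · simp only
        rw [mul_comm, Nat.mul_add_div hm', Nat.div_eq_of_lt hp.2, add_zero]
      · simp only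
        rw [mul_comm, Nat.mul_add_mod, Nat.mod_eq_of_lt hp.2]
    · intro a _; rfl
  rw [h1, Finset.sum_product]
  have h2 : ∀ j, ∑ _r ∈ range m, (if j % 2 = 0 then (1:ℕ) else 0)
      = m * (if j % 2 = 0 then (1:ℕ) else 0) := by
    intro j; rw [Finset.sum_const, smul_eq_mul, Finset.card_range]
  simp only [h2]
  rw [← Finset.mul_sum, sum_ite_even', mul_comm]

open Finset in
private lemma card_fin_filter' (n : ℕ) (p : ℕ → Prop) [DecidablePred p] :
    (Finset.univ.filter (fun i : Fin n => p i.val)).card = ((range n).filter p).card := by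
  refine Finset.card_nbij (fun i => i.val) ?_ ?_ ?_
  · intro a ha
    simp only [mem_coe, mem_filter, mem_univ, true_and] at ha
    simp [a.is_lt, ha]
  · intro a _ b _ h; exact Fin.val_injective h
  · intro b hb
    simp only [coe_filter, mem_range, Set.mem_setOf_eq] at hb
    exact ⟨⟨b, hb.1⟩, by simp [hb.2], rfl⟩

open Finset in
/-- Server-model A-set with `α+β = Km`, `K` even, `M = (K/2)m`: the probability that the
score reaches `(α,β)` with A scoring the last point and scoring exactly `x` points on
his own serve equals `C(M,x) p_a^x (1-p_a)^{M-x} C(M-1, α-x-1) (1-p_b)^{α-x} p_b^{M-α+x}`.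
Rally `i` (0-indexed) is served by A iff `⌊i/m⌋` is even; `true` means A wins the rally. -/
theorem stmt_10 (pa pb : ℝ) (hpa : pa ∈ Set.Ioo (0:ℝ) 1) (hpb : pb ∈ Set.Ioo (0:ℝ) 1)
    (m K α β x : ℕ) (hm : 1 ≤ m) (hK : K % 2 = 0) (hKpos : 0 < K)
    (hscore : α + β = K * m) (hα : 1 ≤ α)
    (hx1 : α - K / 2 * m ≤ x) (hx2 : x ≤ min (α - 1) (K / 2 * m)) :
    ∑ ω ∈ Finset.univ.filter (fun ω : Fin (K * m) → Bool =>
        (Finset.univ.filter (fun i : Fin (K * m) =>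
            (i.val / m) % 2 = 0 ∧ ω i = true)).card = x ∧
        (Finset.univ.filter (fun i : Fin (K * m) => ω i = true)).card = α ∧
        ω ⟨K * m - 1, Nat.sub_lt (Nat.mul_pos hKpos hm) Nat.one_pos⟩ = true),
      ∏ i : Fin (K * m),
        (if (i.val / m) % 2 = 0 then (if ω i then pa else 1 - pa)
         else (if ω i then 1 - pb else pb))
    = ((K / 2 * m).choose x : ℝ) * pa ^ x * (1 - pa) ^ (K / 2 * m - x)
        * ((K / 2 * m - 1).choose (α - x - 1) : ℝ) * (1 - pb) ^ (α - x)
        * pb ^ (K / 2 * m - (α - x)) := by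
  have hm' : 0 < m := hm
  -- arithmetic facts
  have hxα1 : x ≤ α - 1 := le_trans hx2 (min_le_left _ _)
  have hxM : x ≤ K / 2 * m := le_trans hx2 (min_le_right _ _)
  have hKM : K * m = K / 2 * m + K / 2 * m := by
    have h2 : K = K/2 + K/2 := by omega
    calc K * m = (K/2 + K/2) * m := by rw [← h2]
      _ = K / 2 * m + K / 2 * m := by rw [add_mul]
  have hxα : x + 1 ≤ α := by omega
  have hαx : α - x ≤ K / 2 * m := by omega
  -- the A-serve predicate
  set M := K / 2 * m with hMdef
  have hAcard : (Finset.univ.filter (fun i : Fin (K*m) => i.val / m % 2 = 0)).card = M := by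
    rw [card_fin_filter' (K*m) (fun i => i / m % 2 = 0), card_range_filter' K m hm]
    have h3 : (K+1)/2 = K/2 := by omega
    rw [h3]
  have hBcard : (Finset.univ.filter (fun i : Fin (K*m) => ¬ (i.val / m % 2 = 0))).card = M := by
    have h4 := Finset.card_filter_add_card_filter_not
      (s := (Finset.univ : Finset (Fin (K*m)))) (p := fun i => i.val / m % 2 = 0)
    rw [hAcard, Finset.card_univ, Fintype.card_fin] at h4
    omega
  -- the last rally
  set L : Fin (K*m) := ⟨K * m - 1, Nat.sub_lt (Nat.mul_pos hKpos hm) Nat.one_pos⟩ with hLdef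
  have hLP : ¬ ((L : Fin (K*m)).val / m % 2 = 0) := by
    have e0 : m * (K-1) + m = K * m := by
      rw [← Nat.mul_succ, Nat.succ_eq_add_one, Nat.sub_add_cancel hKpos, mul_comm]
    have e1 : K * m - 1 = m * (K-1) + (m-1) := by omega
    have hdiv : (K * m - 1) / m = K - 1 := by
      rw [e1, Nat.mul_add_div hm', Nat.div_eq_of_lt (by omega), add_zero]
    show ¬ ((K * m - 1) / m % 2 = 0)
    rw [hdiv]; omega
  have hLB : L ∈ Finset.univ.filter (fun i : Fin (K*m) => ¬ (i.val / m % 2 = 0)) :=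
    Finset.mem_filter.mpr ⟨Finset.mem_univ _, hLP⟩
  -- key counting fact for ω in the index set
  have hkey : ∀ ω : Fin (K*m) → Bool,
      (Finset.univ.filter (fun i : Fin (K * m) =>
          (i.val / m) % 2 = 0 ∧ ω i = true)).card = x →
      (Finset.univ.filter (fun i : Fin (K * m) => ω i = true)).card = α →
      ((Finset.univ.filter (fun i : Fin (K*m) => i.val / m % 2 = 0)).filter
          (fun i => ω i = true)).card = x ∧
      ((Finset.univ.filter (fun i : Fin (K*m) => ¬ (i.val / m % 2 = 0))).filter
          (fun i => ω i = true)).card = α - x := by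
    intro ω hc1 hc2
    have hAx : ((Finset.univ.filter (fun i : Fin (K*m) => i.val / m % 2 = 0)).filter
        (fun i => ω i = true)).card = x := by
      rw [Finset.filter_filter]; exact hc1
    refine ⟨hAx, ?_⟩
    have hsplit := Finset.card_filter_add_card_filter_not
      (s := Finset.univ.filter (fun i : Fin (K*m) => ω i = true))
      (p := fun i => i.val / m % 2 = 0)
    rw [hc2, Finset.filter_comm (fun i : Fin (K*m) => ω i = true)
      (fun i : Fin (K*m) => i.val / m % 2 = 0),
      Finset.filter_comm (fun i : Fin (K*m) => ω i = true)
      (fun i : Fin (K*m) => ¬ (i.val / m % 2 = 0))] at hsplit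
    omega
  -- every term of the sum is the same constant
  set w : ℝ := pa ^ x * (1 - pa) ^ (M - x) * ((1 - pb) ^ (α - x) * pb ^ (M - (α - x))) with hwdef
  have hterm : ∀ ω ∈ Finset.univ.filter (fun ω : Fin (K * m) → Bool =>
        (Finset.univ.filter (fun i : Fin (K * m) =>
            (i.val / m) % 2 = 0 ∧ ω i = true)).card = x ∧
        (Finset.univ.filter (fun i : Fin (K * m) => ω i = true)).card = α ∧
        ω ⟨K * m - 1, Nat.sub_lt (Nat.mul_pos hKpos hm) Nat.one_pos⟩ = true),
      (∏ i : Fin (K * m),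
        (if (i.val / m) % 2 = 0 then (if ω i then pa else 1 - pa)
         else (if ω i then 1 - pb else pb))) = w := by
    intro ω hω
    simp only [Finset.mem_filter, Finset.mem_univ, true_and] at hω
    obtain ⟨hc1, hc2, _⟩ := hω
    obtain ⟨hAx, hBx⟩ := hkey ω hc1 hc2
    have hAnx : ((Finset.univ.filter (fun i : Fin (K*m) => i.val / m % 2 = 0)).filter
        (fun i => ¬ (ω i = true))).card = M - x := by
      have h5 := Finset.card_filter_add_card_filter_not
        (s := Finset.univ.filter (fun i : Fin (K*m) => i.val / m % 2 = 0))
        (p := fun i => ω i = true)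
      rw [hAcard, hAx] at h5
      omega
    have hBnx : ((Finset.univ.filter (fun i : Fin (K*m) => ¬ (i.val / m % 2 = 0))).filter
        (fun i => ¬ (ω i = true))).card = M - (α - x) := by
      have h5 := Finset.card_filter_add_card_filter_not
        (s := Finset.univ.filter (fun i : Fin (K*m) => ¬ (i.val / m % 2 = 0)))
        (p := fun i => ω i = true)
      rw [hBcard, hBx] at h5
      omega
    rw [← Finset.prod_filter_mul_prod_filter_not Finset.univ
      (fun i : Fin (K*m) => i.val / m % 2 = 0)]
    have e1 : (∏ i ∈ Finset.univ.filter (fun i : Fin (K*m) => i.val / m % 2 = 0),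
        (if (i.val / m) % 2 = 0 then (if ω i then pa else 1 - pa)
         else (if ω i then 1 - pb else pb)))
        = ∏ i ∈ Finset.univ.filter (fun i : Fin (K*m) => i.val / m % 2 = 0),
          (if ω i then pa else 1 - pa) :=
      Finset.prod_congr rfl (fun i hi => if_pos (Finset.mem_filter.mp hi).2)
    have e2 : (∏ i ∈ Finset.univ.filter (fun i : Fin (K*m) => ¬ (i.val / m % 2 = 0)),
        (if (i.val / m) % 2 = 0 then (if ω i then pa else 1 - pa)
         else (if ω i then 1 - pb else pb)))
        = ∏ i ∈ Finset.univ.filter (fun i : Fin (K*m) => ¬ (i.val / m % 2 = 0)),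
          (if ω i then 1 - pb else pb) :=
      Finset.prod_congr rfl (fun i hi => if_neg (Finset.mem_filter.mp hi).2)
    rw [e1, e2, Finset.prod_ite, Finset.prod_ite, Finset.prod_const, Finset.prod_const,
      Finset.prod_const, Finset.prod_const, hAx, hAnx, hBx, hBnx]
  rw [Finset.sum_congr rfl hterm, Finset.sum_const]
  -- now count the index set
  have hScard : (Finset.univ.filter (fun ω : Fin (K * m) → Bool =>
        (Finset.univ.filter (fun i : Fin (K * m) =>
            (i.val / m) % 2 = 0 ∧ ω i = true)).card = x ∧
        (Finset.univ.filter (fun i : Fin (K * m) => ω i = true)).card = α ∧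
        ω ⟨K * m - 1, Nat.sub_lt (Nat.mul_pos hKpos hm) Nat.one_pos⟩ = true)).card
      = M.choose x * (M - 1).choose (α - x - 1) := by
    have hbij : (Finset.univ.filter (fun ω : Fin (K * m) → Bool =>
        (Finset.univ.filter (fun i : Fin (K * m) =>
            (i.val / m) % 2 = 0 ∧ ω i = true)).card = x ∧
        (Finset.univ.filter (fun i : Fin (K * m) => ω i = true)).card = α ∧
        ω ⟨K * m - 1, Nat.sub_lt (Nat.mul_pos hKpos hm) Nat.one_pos⟩ = true)).card
      = (((Finset.univ.filter (fun i : Fin (K*m) => i.val / m % 2 = 0)).powersetCard x) ×ˢ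
         (((Finset.univ.filter (fun i : Fin (K*m) => ¬ (i.val / m % 2 = 0))).erase L).powersetCard
            (α - x - 1))).card := by
      refine Finset.card_bij'
        (fun ω _ => ((Finset.univ.filter (fun i : Fin (K*m) => i.val / m % 2 = 0)).filter
            (fun k => ω k = true),
          ((Finset.univ.filter (fun i : Fin (K*m) => ¬ (i.val / m % 2 = 0))).filter
            (fun k => ω k = true)).erase L))
        (fun p _ => fun k => decide (k = L ∨ k ∈ p.1 ∨ k ∈ p.2)) ?_ ?_ ?_ ?_
      · -- forward map lands in target
        intro ω hω
        simp only [Finset.mem_filter, Finset.mem_univ, true_and] at hω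
        obtain ⟨hc1, hc2, hc3⟩ := hω
        obtain ⟨hAx, hBx⟩ := hkey ω hc1 hc2
        have hLmem : L ∈ (Finset.univ.filter
            (fun i : Fin (K*m) => ¬ (i.val / m % 2 = 0))).filter (fun k => ω k = true) :=
          Finset.mem_filter.mpr ⟨hLB, hc3⟩
        simp only [Finset.mem_product, Finset.mem_powersetCard]
        refine ⟨⟨Finset.filter_subset _ _, hAx⟩,
          ⟨Finset.erase_subset_erase L (Finset.filter_subset _ _), ?_⟩⟩
        rw [Finset.card_erase_of_mem hLmem, hBx]
      · -- backward map lands in source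
        rintro ⟨U, V⟩ hp
        simp only [Finset.mem_product, Finset.mem_powersetCard] at hp
        obtain ⟨⟨hU, hUc⟩, hV, hVc⟩ := hp
        have hUP : ∀ k ∈ U, (k : Fin (K*m)).val / m % 2 = 0 :=
          fun k hk => (Finset.mem_filter.mp (hU hk)).2
        have hVP : ∀ k ∈ V, ¬ ((k : Fin (K*m)).val / m % 2 = 0) :=
          fun k hk => (Finset.mem_filter.mp (Finset.mem_of_mem_erase (hV hk))).2
        have hVL : ∀ k ∈ V, k ≠ L := fun k hk => Finset.ne_of_mem_erase (hV hk)
        have hLU : L ∉ U := fun h => hLP (hUP L h)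
        have hLV : L ∉ V := fun h => (hVL L h) rfl
        have hUV : Disjoint U V := Finset.disjoint_left.mpr
          (fun {k} hkU hkV => (hVP k hkV) (hUP k hkU))
        simp only [Finset.mem_filter, Finset.mem_univ, true_and]
        refine ⟨?_, ?_, ?_⟩
        · have hset : Finset.univ.filter (fun k : Fin (K*m) =>
              (k.val / m) % 2 = 0 ∧ (decide (k = L ∨ k ∈ U ∨ k ∈ V)) = true) = U := by
            ext k
            simp only [Finset.mem_filter, Finset.mem_univ, true_and, decide_eq_true_eq]
            constructor
            · rintro ⟨hPk, (rfl | hk | hk)⟩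
              · exact absurd hPk hLP
              · exact hk
              · exact absurd hPk (hVP k hk)
            · intro hk
              exact ⟨hUP k hk, Or.inr (Or.inl hk)⟩
          rw [hset, hUc]
        · have hset : Finset.univ.filter (fun k : Fin (K*m) =>
              (decide (k = L ∨ k ∈ U ∨ k ∈ V)) = true) = insert L (U ∪ V) := by
            ext k
            simp only [Finset.mem_filter, Finset.mem_univ, true_and, decide_eq_true_eq,
              Finset.mem_insert, Finset.mem_union]
          rw [hset, Finset.card_insert_of_notMem (by
              simp only [Finset.mem_union]
              rintro (h | h)
              · exact hLU h
              · exact hLV h),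
            Finset.card_union_of_disjoint hUV, hUc, hVc]
          omega
        · simp [hLdef]
      · -- left inverse
        intro ω hω
        simp only [Finset.mem_filter, Finset.mem_univ, true_and] at hω
        obtain ⟨hc1, hc2, hc3⟩ := hω
        funext k
        have hio : (k = L ∨
            k ∈ (Finset.univ.filter (fun i : Fin (K*m) => i.val / m % 2 = 0)).filter
              (fun k => ω k = true) ∨
            k ∈ ((Finset.univ.filter (fun i : Fin (K*m) => ¬ (i.val / m % 2 = 0))).filter
              (fun k => ω k = true)).erase L) ↔ ω k = true := by
          constructor
          · rintro (rfl | hk | hk)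
            · exact hc3
            · exact (Finset.mem_filter.mp hk).2
            · exact (Finset.mem_filter.mp (Finset.mem_of_mem_erase hk)).2
          · intro hk
            by_cases hkL : k = L
            · exact Or.inl hkL
            by_cases hPk : (k : Fin (K*m)).val / m % 2 = 0
            · exact Or.inr (Or.inl (Finset.mem_filter.mpr
                ⟨Finset.mem_filter.mpr ⟨Finset.mem_univ _, hPk⟩, hk⟩))
            · exact Or.inr (Or.inr (Finset.mem_erase.mpr ⟨hkL,
                Finset.mem_filter.mpr ⟨Finset.mem_filter.mpr ⟨Finset.mem_univ _, hPk⟩, hk⟩⟩))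
        cases hk : ω k with
        | true => exact decide_eq_true (hio.mpr hk)
        | false =>
          refine decide_eq_false (fun h => ?_)
          have := hio.mp h
          rw [hk] at this
          cases this
      · -- right inverse
        rintro ⟨U, V⟩ hp
        simp only [Finset.mem_product, Finset.mem_powersetCard] at hp
        obtain ⟨⟨hU, hUc⟩, hV, hVc⟩ := hp
        have hUP : ∀ k ∈ U, (k : Fin (K*m)).val / m % 2 = 0 :=
          fun k hk => (Finset.mem_filter.mp (hU hk)).2
        have hVP : ∀ k ∈ V, ¬ ((k : Fin (K*m)).val / m % 2 = 0) :=
          fun k hk => (Finset.mem_filter.mp (Finset.mem_of_mem_erase (hV hk))).2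
        have hVL : ∀ k ∈ V, k ≠ L := fun k hk => Finset.ne_of_mem_erase (hV hk)
        have hVB : ∀ k ∈ V, k ∈ Finset.univ.filter
            (fun i : Fin (K*m) => ¬ (i.val / m % 2 = 0)) :=
          fun k hk => Finset.mem_of_mem_erase (hV hk)
        refine Prod.ext ?_ ?_
        · ext k
          simp only [Finset.mem_filter, Finset.mem_univ, true_and, decide_eq_true_eq]
          constructor
          · rintro ⟨hPk, (rfl | hk | hk)⟩
            · exact absurd hPk hLP
            · exact hk
            · exact absurd hPk (hVP k hk)
          · intro hk
            exact ⟨hUP k hk, Or.inr (Or.inl hk)⟩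
        · ext k
          simp only [Finset.mem_erase, Finset.mem_filter, Finset.mem_univ, true_and,
            decide_eq_true_eq]
          constructor
          · rintro ⟨hkL, hPk, (rfl | hk | hk)⟩
            · exact absurd rfl hkL
            · exact absurd (hUP k hk) hPk
            · exact hk
          · intro hk
            exact ⟨hVL k hk, hVP k hk, Or.inr (Or.inr hk)⟩
    rw [hbij, Finset.card_product, Finset.card_powersetCard, Finset.card_powersetCard,
      hAcard, Finset.card_erase_of_mem hLB, hBcard]
  rw [hScard, hwdef, nsmul_eq_mul]
  push_cast
  ring
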